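/- arXiv:2605.12876 — 3 statements merged into one kernel-verified Lean document; each statement's English description precedes it below -/
import Mathlib

section
/- Let S be a countable set, p₁ and q₁ probability mass functions on S with the same support, and γ₁(z₁) = q₁(z₁)/p₁(z₁) > 0 on the support. Let D ≥ 1, σ > 0, x₂ ∈ ℝ^D, and Δ ∈ ℝ^D with r := ‖Δ‖₂ > 0. Let v be the product of the discrete measure with mass function q₁ on S and the D-fold product of one-dimensional Gaussian measures N((x₂ + Δ)ᵢ, σ²) on ℝ^D. Define γ₂(z₂) = exp(σ⁻²·Δᵀ(z₂ − x₂) − r²/(2σ²)) and γ(z₁,z₂) = γ₁(z₁)·γ₂(z₂). Then for every t > 0, v({(z₁,z₂) : γ(z₁,z₂) ≤ t}) = Σ_{z₁∈S} q₁(z₁) · Φ((r²/2 + σ²(log t − log γ₁(z₁)))/(σr) − r/σ), where Φ is the standard normal cumulative distribution function. -/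
open MeasureTheory ProbabilityTheory

/-- The standard normal cumulative distribution function `Φ`. -/
noncomputable def stdNormalCDF (t : ℝ) : ℝ :=
  ((gaussianReal 0 1) (Set.Iic t)).toReal

/-- The discrete measure on a countable set with mass function `p`. -/
noncomputable def discreteMeasure {S : Type*} [MeasurableSpace S] (p : S → ℝ) :
    Measure S :=
  Measure.sum (fun z => ENNReal.ofReal (p z) • Measure.dirac z)

open Real
open scoped NNReal ENNReal

lemma gaussPDF_conv_real (m₁ m₂ : ℝ) (v₁ v₂ : ℝ≥0) (h₁ : v₁ ≠ 0) (h₂ : v₂ ≠ 0) (y : ℝ) :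
    ∫ x, gaussianPDFReal m₁ v₁ x * gaussianPDFReal m₂ v₂ (y - x)
      = gaussianPDFReal (m₁ + m₂) (v₁ + v₂) y := by
  have hV₁ : (0:ℝ) < v₁ := by exact_mod_cast pos_iff_ne_zero.2 h₁
  have hV₂ : (0:ℝ) < v₂ := by exact_mod_cast pos_iff_ne_zero.2 h₂
  set V₁ : ℝ := (v₁ : ℝ) with hV1d
  set V₂ : ℝ := (v₂ : ℝ) with hV2d
  set a : ℝ := (V₁ + V₂) / (2 * V₁ * V₂) with ha_def
  have ha : 0 < a := by positivity
  set ms : ℝ := m₁ + V₁ * (y - m₁ - m₂) / (V₁ + V₂) with hms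
  set C : ℝ := (Real.sqrt (2*π*V₁))⁻¹ * (Real.sqrt (2*π*V₂))⁻¹ *
      Real.exp (-(y - m₁ - m₂)^2 / (2*(V₁+V₂))) with hC
  have hexp : ∀ x : ℝ, (-(x - m₁)^2 / (2*V₁)) + (-(y - x - m₂)^2 / (2*V₂))
      = (-(y - m₁ - m₂)^2 / (2*(V₁+V₂))) + (-a * (x - ms)^2) := by
    intro x
    rw [ha_def, hms]
    have h12 : V₁ + V₂ ≠ 0 := by positivity
    field_simp
    ring
  have hpt : ∀ x, gaussianPDFReal m₁ v₁ x * gaussianPDFReal m₂ v₂ (y - x)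
      = C * Real.exp (-a * (x - ms)^2) := by
    intro x
    simp only [gaussianPDFReal, hC, ← hV1d, ← hV2d]
    have e1 : rexp (-(x - m₁)^2 / (2*V₁)) * rexp (-(y - x - m₂)^2 / (2*V₂))
        = rexp (-(y - m₁ - m₂)^2 / (2*(V₁+V₂))) * rexp (-a * (x - ms)^2) := by
      rw [← Real.exp_add, ← Real.exp_add, hexp x]
    calc (Real.sqrt (2*π*V₁))⁻¹ * rexp (-(x - m₁)^2 / (2*V₁)) *
          ((Real.sqrt (2*π*V₂))⁻¹ * rexp (-(y - x - m₂)^2 / (2*V₂)))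
        = (Real.sqrt (2*π*V₁))⁻¹ * (Real.sqrt (2*π*V₂))⁻¹ *
          (rexp (-(x - m₁)^2 / (2*V₁)) * rexp (-(y - x - m₂)^2 / (2*V₂))) := by ring
      _ = (Real.sqrt (2*π*V₁))⁻¹ * (Real.sqrt (2*π*V₂))⁻¹ *
          (rexp (-(y - m₁ - m₂)^2 / (2*(V₁+V₂))) * rexp (-a * (x - ms)^2)) := by rw [e1]
      _ = _ := by ring
  rw [show (fun x => gaussianPDFReal m₁ v₁ x * gaussianPDFReal m₂ v₂ (y - x))
      = fun x => C * Real.exp (-a * (x - ms)^2) from funext hpt]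
  rw [integral_const_mul,
    integral_sub_right_eq_self (fun x => Real.exp (-a * x^2)) ms, integral_gaussian a]
  have hsq : (Real.sqrt (2*π*V₁))⁻¹ * (Real.sqrt (2*π*V₂))⁻¹ * Real.sqrt (π / a)
      = (Real.sqrt (2*π*(V₁+V₂)))⁻¹ := by
    rw [← Real.sqrt_inv, ← Real.sqrt_inv, ← Real.sqrt_mul (by positivity),
      ← Real.sqrt_mul (by positivity), ← Real.sqrt_inv]
    congr 1
    rw [ha_def]
    field_simp
  have hcoe : ((v₁ + v₂ : ℝ≥0) : ℝ) = V₁ + V₂ := by push_cast; ring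
  rw [hC, gaussianPDFReal, hcoe]
  calc (Real.sqrt (2*π*V₁))⁻¹ * (Real.sqrt (2*π*V₂))⁻¹ *
        Real.exp (-(y - m₁ - m₂)^2 / (2*(V₁+V₂))) * Real.sqrt (π / a)
      = ((Real.sqrt (2*π*V₁))⁻¹ * (Real.sqrt (2*π*V₂))⁻¹ * Real.sqrt (π / a)) *
        Real.exp (-(y - m₁ - m₂)^2 / (2*(V₁+V₂))) := by ring
    _ = (Real.sqrt (2*π*(V₁+V₂)))⁻¹ * Real.exp (-(y - (m₁+m₂))^2 / (2*(V₁+V₂))) := by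
        rw [hsq]; ring_nf

lemma gaussPDF_conv_lintegral (m₁ m₂ : ℝ) (v₁ v₂ : ℝ≥0) (h₁ : v₁ ≠ 0) (h₂ : v₂ ≠ 0) (y : ℝ) :
    ∫⁻ x, gaussianPDF m₁ v₁ x * gaussianPDF m₂ v₂ (y - x) = gaussianPDF (m₁ + m₂) (v₁ + v₂) y := by
  have hg : Integrable (fun x => gaussianPDFReal m₂ v₂ (y - x)) :=
    (integrable_gaussianPDFReal m₂ v₂).comp_sub_left y
  have hbdd : ∃ C, ∀ x, ‖gaussianPDFReal m₁ v₁ x‖ ≤ C := by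
    refine ⟨(Real.sqrt (2*π*v₁))⁻¹, fun x => ?_⟩
    rw [Real.norm_eq_abs, abs_of_nonneg (gaussianPDFReal_nonneg _ _ _), gaussianPDFReal]
    have h1 : rexp (-(x - m₁)^2 / (2*(v₁:ℝ))) ≤ 1 := by
      rw [Real.exp_le_one_iff]
      have : (0:ℝ) ≤ (x - m₁)^2 / (2*(v₁:ℝ)) := by positivity
      linarith [this, neg_div (2*(v₁:ℝ)) ((x - m₁)^2)]
    calc (√(2*π*(v₁:ℝ)))⁻¹ * rexp (-(x - m₁)^2 / (2*(v₁:ℝ)))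
        ≤ (√(2*π*(v₁:ℝ)))⁻¹ * 1 := by
          apply mul_le_mul_of_nonneg_left h1 (by positivity)
      _ = _ := mul_one _
  have hint : Integrable (fun x => gaussianPDFReal m₁ v₁ x * gaussianPDFReal m₂ v₂ (y - x)) :=
    hg.bdd_mul (measurable_gaussianPDFReal m₁ v₁).aestronglyMeasurable (ae_of_all _ hbdd.choose_spec)
  simp only [gaussianPDF]
  calc ∫⁻ x, ENNReal.ofReal (gaussianPDFReal m₁ v₁ x) * ENNReal.ofReal (gaussianPDFReal m₂ v₂ (y - x))
      = ∫⁻ x, ENNReal.ofReal (gaussianPDFReal m₁ v₁ x * gaussianPDFReal m₂ v₂ (y - x)) := by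
        congr 1; ext x; rw [ENNReal.ofReal_mul (gaussianPDFReal_nonneg _ _ _)]
    _ = ENNReal.ofReal (∫ x, gaussianPDFReal m₁ v₁ x * gaussianPDFReal m₂ v₂ (y - x)) := by
        rw [← ofReal_integral_eq_lintegral_ofReal hint (ae_of_all _ fun x =>
          mul_nonneg (gaussianPDFReal_nonneg _ _ _) (gaussianPDFReal_nonneg _ _ _))]
    _ = _ := by rw [gaussPDF_conv_real m₁ m₂ v₁ v₂ h₁ h₂ y]

lemma gaussianReal_conv_map (m₁ m₂ : ℝ) (v₁ v₂ : ℝ≥0) :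
    ((gaussianReal m₁ v₁).prod (gaussianReal m₂ v₂)).map (fun p : ℝ × ℝ => p.1 + p.2)
      = gaussianReal (m₁ + m₂) (v₁ + v₂) := by
  by_cases h₁ : v₁ = 0
  · subst h₁
    rw [gaussianReal_zero_var, Measure.dirac_prod,
      Measure.map_map measurable_add measurable_prodMk_left]
    have : ((fun p : ℝ × ℝ => p.1 + p.2) ∘ Prod.mk m₁) = (fun y => m₁ + y) := rfl
    rw [this, gaussianReal_map_const_add, add_comm m₂ m₁, zero_add]
  by_cases h₂ : v₂ = 0
  · subst h₂
    rw [gaussianReal_zero_var, Measure.prod_dirac,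
      Measure.map_map measurable_add measurable_prodMk_right]
    have : ((fun p : ℝ × ℝ => p.1 + p.2) ∘ (fun x => (x, m₂))) = (fun x => x + m₂) := rfl
    rw [this, gaussianReal_map_add_const, add_zero]
  have h12 : v₁ + v₂ ≠ 0 := by simp [h₁]
  ext s hs
  rw [Measure.map_apply measurable_add hs, Measure.prod_apply (hs.preimage measurable_add)]
  set H : ℝ → ℝ → ℝ≥0∞ := fun x u =>
    s.indicator (fun _ => (1:ℝ≥0∞)) u * gaussianPDF m₂ v₂ (u - x) with hH
  have hHmeas : Measurable (Function.uncurry H) := by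
    apply Measurable.mul
    · exact (measurable_const.indicator hs).comp measurable_snd
    · exact (measurable_gaussianPDF _ _).comp (measurable_snd.sub measurable_fst)
  have key : ∀ x : ℝ, gaussianReal m₂ v₂ (Prod.mk x ⁻¹' ((fun p : ℝ × ℝ => p.1 + p.2) ⁻¹' s))
      = ∫⁻ u, H x u := by
    intro x
    have hpre : (Prod.mk x ⁻¹' ((fun p : ℝ × ℝ => p.1 + p.2) ⁻¹' s)) = (fun y => x + y) ⁻¹' s := rfl
    rw [hpre, gaussianReal_apply _ h₂,
      ← lintegral_indicator (hs.preimage (measurable_const_add x)) (gaussianPDF m₂ v₂),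
      ← lintegral_add_left_eq_self (fun u => H x u) x]
    congr 1; ext y
    by_cases hy : x + y ∈ s
    · simp [hH, Set.indicator_of_mem, hy, Set.mem_preimage, add_sub_cancel_left]
    · simp [hH, Set.indicator_of_notMem, hy, Set.mem_preimage]
  calc ∫⁻ x, gaussianReal m₂ v₂ (Prod.mk x ⁻¹' ((fun p : ℝ × ℝ => p.1 + p.2) ⁻¹' s))
          ∂(gaussianReal m₁ v₁)
      = ∫⁻ x, ∫⁻ u, H x u ∂volume ∂(gaussianReal m₁ v₁) := by
        congr 1; ext x; rw [key x]
    _ = ∫⁻ x, gaussianPDF m₁ v₁ x * ∫⁻ u, H x u := by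
        rw [gaussianReal_of_var_ne_zero _ h₁]
        exact lintegral_withDensity_eq_lintegral_mul _ (measurable_gaussianPDF _ _)
          hHmeas.lintegral_prod_right'
    _ = ∫⁻ x, ∫⁻ u, gaussianPDF m₁ v₁ x * H x u := by
        congr 1; ext x
        exact (lintegral_const_mul _ (hHmeas.comp measurable_prodMk_left)).symm
    _ = ∫⁻ u, ∫⁻ x, gaussianPDF m₁ v₁ x * H x u := by
        apply lintegral_lintegral_swap
        exact (((measurable_gaussianPDF _ _).comp measurable_fst).mul hHmeas).aemeasurable
    _ = ∫⁻ u, s.indicator (fun _ => (1:ℝ≥0∞)) u *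
          ∫⁻ x, gaussianPDF m₁ v₁ x * gaussianPDF m₂ v₂ (u - x) := by
        congr 1; ext u
        calc ∫⁻ x, gaussianPDF m₁ v₁ x * H x u
            = ∫⁻ x, s.indicator (fun _ => (1:ℝ≥0∞)) u *
                (gaussianPDF m₁ v₁ x * gaussianPDF m₂ v₂ (u - x)) := by
              congr 1; ext x; simp only [hH]; ring
          _ = _ := lintegral_const_mul _ ((measurable_gaussianPDF _ _).mul
                ((measurable_gaussianPDF _ _).comp (measurable_const.sub measurable_id)))
    _ = ∫⁻ u, s.indicator (fun _ => (1:ℝ≥0∞)) u * gaussianPDF (m₁ + m₂) (v₁ + v₂) u := by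
        congr 1; ext u; rw [gaussPDF_conv_lintegral m₁ m₂ v₁ v₂ h₁ h₂ u]
    _ = ∫⁻ u, s.indicator (gaussianPDF (m₁ + m₂) (v₁ + v₂)) u := by
        congr 1; ext u
        by_cases hu : u ∈ s <;> simp [Set.indicator_of_mem, Set.indicator_of_notMem, hu]
    _ = gaussianReal (m₁ + m₂) (v₁ + v₂) s := by
        rw [lintegral_indicator hs, gaussianReal_apply _ h12]

lemma map_pi_gauss (n : ℕ) (c m : Fin n → ℝ) (v : ℝ≥0) :
    (Measure.pi fun i => gaussianReal (m i) v).map (fun z : Fin n → ℝ => ∑ i, c i * z i)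
      = gaussianReal (∑ i, c i * m i) (⟨∑ i, (c i)^2, by positivity⟩ * v) := by
  induction n with
  | zero =>
      have h0 : (⟨∑ i : Fin 0, (c i)^2, by positivity⟩ * v : ℝ≥0) = 0 := by
        simp; exact zero_mul v
      rw [h0]
      simp only [Finset.univ_eq_empty, Finset.sum_empty]
      rw [Measure.map_const, measure_univ, one_smul, gaussianReal_zero_var]
  | succ n ih =>
      set μs : Fin (n+1) → Measure ℝ := fun i => gaussianReal (m i) v with hμs
      have hmp := measurePreserving_piFinSuccAbove μs 0
      set e := MeasurableEquiv.piFinSuccAbove (fun _ : Fin (n+1) => ℝ) 0 with he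
      set g : ℝ × (Fin n → ℝ) → ℝ := fun p => c 0 * p.1 + ∑ j, c j.succ * p.2 j with hg
      have hgm : Measurable g := by
        apply Measurable.add
        · exact measurable_fst.const_mul _
        · exact Finset.measurable_sum _ fun j _ => (measurable_pi_apply j).comp measurable_snd |>.const_mul _
      have hfe : (fun z : Fin (n+1) → ℝ => ∑ i, c i * z i) = g ∘ e := by
        funext z
        simp only [hg, he, Function.comp_apply, MeasurableEquiv.piFinSuccAbove_apply,
          Fin.insertNthEquiv, Fin.sum_univ_succ]
        congr 1
      rw [hfe, ← Measure.map_map hgm e.measurable, hmp.map_eq]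
      have hsucc : (fun j : Fin n => μs ((0:Fin (n+1)).succAbove j)) = fun j => gaussianReal (m j.succ) v := by
        funext j; rw [hμs]; simp [Fin.succAbove_zero]
      rw [hsucc]
      have hprodmap : g = (fun q : ℝ × ℝ => q.1 + q.2) ∘
          (Prod.map (fun x => c 0 * x) (fun z : Fin n → ℝ => ∑ j, c j.succ * z j)) := rfl
      rw [hprodmap, ← Measure.map_map measurable_add ((measurable_const_mul _).prodMap
        (Finset.measurable_sum _ fun j _ => (measurable_pi_apply j).const_mul _))]
      rw [← Measure.map_prod_map _ _ (measurable_const_mul _)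
        (Finset.measurable_sum _ fun j _ => (measurable_pi_apply j).const_mul _)]
      rw [hμs]
      rw [show (fun x : ℝ => c 0 * x) = (c 0 * ·) from rfl, gaussianReal_map_const_mul]
      rw [ih (fun j => c j.succ) (fun j => m j.succ)]
      rw [gaussianReal_conv_map]
      congr 1
      · rw [Fin.sum_univ_succ]
      · ext
        show c 0 ^ 2 * (v:ℝ) + (∑ i : Fin n, c i.succ ^ 2) * v = (∑ i, c i ^ 2) * v
        rw [Fin.sum_univ_succ]
        ring

/-- **Adversarial-side evaluation identity of hybrid randomized smoothing.**
Under the adversarial smoothing distribution `v = q₁ ⊗ N(x₂+Δ, σ²I_D)`, the joint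
likelihood ratio `γ(z₁,z₂) = (q₁/p₁)(z₁)·exp(σ⁻²Δᵀ(z₂−x₂) − r²/(2σ²))` satisfies
`v({γ ≤ t}) = Σ_{z₁} q₁(z₁)·Φ((r²/2 + σ²(log t − log γ₁(z₁)))/(σr) − r/σ)`. -/
theorem hybrid_adversarial_evaluation
    {S : Type*} [Countable S] [MeasurableSpace S] [MeasurableSingletonClass S]
    (p₁ q₁ : S → ℝ)
    (hp₁nn : ∀ z, 0 ≤ p₁ z) (hp₁sum : ∑' z, p₁ z = 1)
    (hq₁nn : ∀ z, 0 ≤ q₁ z) (hq₁sum : ∑' z, q₁ z = 1)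
    (hsupp : ∀ z, 0 < p₁ z ↔ 0 < q₁ z)
    (γ₁ : S → ℝ) (hγ₁def : γ₁ = fun z => q₁ z / p₁ z)
    (hγ₁pos : ∀ z, 0 < p₁ z → 0 < γ₁ z)
    (D : ℕ) (hD : 1 ≤ D) (σ : ℝ) (hσ : 0 < σ)
    (x₂ Δ : Fin D → ℝ)
    (r : ℝ) (hr : r = Real.sqrt (∑ i, Δ i ^ 2)) (hr0 : 0 < r)
    (v : Measure (S × (Fin D → ℝ)))
    (hv : v = (discreteMeasure q₁).prod
      (Measure.pi (fun i => gaussianReal (x₂ i + Δ i) ⟨σ ^ 2, sq_nonneg σ⟩)))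
    (t : ℝ) (ht : 0 < t) :
    (v {q : S × (Fin D → ℝ) |
        γ₁ q.1 * Real.exp ((∑ i, Δ i * (q.2 i - x₂ i)) / σ ^ 2 - r ^ 2 / (2 * σ ^ 2))
          ≤ t}).toReal
      = ∑' z₁, q₁ z₁ *
          stdNormalCDF
            ((r ^ 2 / 2 + σ ^ 2 * (Real.log t - Real.log (γ₁ z₁))) / (σ * r) - r / σ) := by
  have hσ2 : (0:ℝ) < σ ^ 2 := by positivity
  have hr2 : r ^ 2 = ∑ i, Δ i ^ 2 := by rw [hr]; exact Real.sq_sqrt (by positivity)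
  set ν := Measure.pi (fun i : Fin D => gaussianReal (x₂ i + Δ i) ⟨σ ^ 2, sq_nonneg σ⟩) with hν
  haveI : ∀ i, IsProbabilityMeasure (gaussianReal (x₂ i + Δ i) ⟨σ ^ 2, sq_nonneg σ⟩) := fun i =>
    (inferInstance : IsProbabilityMeasure (gaussianReal (x₂ i + Δ i) (NNReal.mk (σ ^ 2) (sq_nonneg σ))))
  have hFmeas : Measurable (fun q : S × (Fin D → ℝ) =>
      γ₁ q.1 * Real.exp ((∑ i, Δ i * (q.2 i - x₂ i)) / σ ^ 2 - r ^ 2 / (2 * σ ^ 2))) := by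
    apply Measurable.mul
    · exact (measurable_of_countable γ₁).comp measurable_fst
    · apply Real.measurable_exp.comp
      apply Measurable.sub _ measurable_const
      apply Measurable.div_const
      exact Finset.measurable_sum _ fun i _ =>
        (((measurable_pi_apply i).comp measurable_snd).sub measurable_const).const_mul _
  have hA : MeasurableSet {q : S × (Fin D → ℝ) |
      γ₁ q.1 * Real.exp ((∑ i, Δ i * (q.2 i - x₂ i)) / σ ^ 2 - r ^ 2 / (2 * σ ^ 2)) ≤ t} :=
    measurableSet_le hFmeas measurable_const
  rw [hv, Measure.prod_apply hA, discreteMeasure, lintegral_sum_measure]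
  simp_rw [lintegral_smul_measure, lintegral_dirac, smul_eq_mul]
  rw [ENNReal.tsum_toReal_eq
    (fun z => ENNReal.mul_ne_top ENNReal.ofReal_ne_top (measure_ne_top _ _))]
  refine tsum_congr fun z => ?_
  rw [ENNReal.toReal_mul, ENNReal.toReal_ofReal (hq₁nn z)]
  by_cases hq : q₁ z ≤ 0
  · rw [le_antisymm hq (hq₁nn z)]; simp
  push_neg at hq
  have hγ : 0 < γ₁ z := hγ₁pos z ((hsupp z).2 hq)
  congr 1
  set cz : ℝ := σ^2 * (Real.log t - Real.log (γ₁ z)) + r^2/2 + ∑ i, Δ i * x₂ i with hcz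
  have hsec : Prod.mk z ⁻¹' {q : S × (Fin D → ℝ) |
      γ₁ q.1 * Real.exp ((∑ i, Δ i * (q.2 i - x₂ i)) / σ ^ 2 - r ^ 2 / (2 * σ ^ 2)) ≤ t}
      = (fun z₂ : Fin D → ℝ => ∑ i, Δ i * z₂ i) ⁻¹' Set.Iic cz := by
    ext z₂
    simp only [Set.mem_preimage, Set.mem_setOf_eq, Set.mem_Iic]
    rw [mul_comm (γ₁ z), ← le_div_iff₀ hγ,
      ← Real.le_log_iff_exp_le (by positivity), Real.log_div (ne_of_gt ht) (ne_of_gt hγ)]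
    have hsum : (∑ i, Δ i * (z₂ i - x₂ i)) = (∑ i, Δ i * z₂ i) - ∑ i, Δ i * x₂ i := by
      rw [← Finset.sum_sub_distrib]; congr 1; ext i; ring
    rw [hsum, sub_le_iff_le_add, div_le_iff₀ hσ2, sub_le_iff_le_add]
    have hfin : (Real.log t - Real.log (γ₁ z) + r^2/(2*σ^2)) * σ^2 + (∑ i, Δ i * x₂ i) = cz := by
      rw [hcz]; field_simp
    rw [hfin]
  rw [hsec, ← Measure.map_apply
    (Finset.measurable_sum _ fun i _ => (measurable_pi_apply i).const_mul _) measurableSet_Iic,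
    hν, map_pi_gauss D Δ (fun i => x₂ i + Δ i) ⟨σ^2, sq_nonneg σ⟩]
  set M : ℝ := ∑ i, Δ i * (x₂ i + Δ i) with hMdef
  have hM : M = (∑ i, Δ i * x₂ i) + r^2 := by
    rw [hMdef, hr2, ← Finset.sum_add_distrib]; congr 1; ext i; ring
  have hV1 : ((⟨(σ*r)^2, sq_nonneg _⟩ : ℝ≥0) * 1)
      = ((⟨∑ i, Δ i ^ 2, by positivity⟩ : ℝ≥0) * (⟨σ^2, sq_nonneg σ⟩ : ℝ≥0)) := by
    rw [mul_one]; apply NNReal.eq; show (σ*r)^2 = (∑ i, Δ i ^ 2) * σ^2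
    rw [← hr2]; ring
  have hmap2 : gaussianReal M ((⟨∑ i, Δ i ^ 2, by positivity⟩ : ℝ≥0) * (⟨σ^2, sq_nonneg σ⟩ : ℝ≥0))
      = ((gaussianReal 0 1).map ((σ*r) * ·)).map (· + M) := by
    rw [← hV1, gaussianReal_map_const_mul, mul_zero, gaussianReal_map_add_const, zero_add]; rfl
  erw [hmap2]; rw [Measure.map_apply (measurable_add_const M) measurableSet_Iic,
    Measure.map_apply (measurable_const_mul _) (measurableSet_Iic.preimage (measurable_add_const M))]
  have hpre : ((σ*r) * ·) ⁻¹' ((· + M) ⁻¹' Set.Iic cz) = Set.Iic ((cz - M)/(σ*r)) := by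
    ext x
    simp only [Set.mem_preimage, Set.mem_Iic]
    rw [le_div_iff₀ (by positivity : (0:ℝ) < σ*r)]
    constructor <;> intro h <;> nlinarith
  have hσ' : σ ≠ 0 := ne_of_gt hσ
  have hr' : r ≠ 0 := ne_of_gt hr0
  have harg : (cz - M)/(σ*r)
      = (r^2/2 + σ^2*(Real.log t - Real.log (γ₁ z)))/(σ*r) - r/σ := by
    rw [hcz, hM]; field_simp; ring
  rw [hpre, harg, stdNormalCDF]
end

section
/- Fix σ > 0, δ ≥ 0, and p_A ∈ (0,1). Let μ = N(0, σ²) and ν = N(δ, σ²) be one-dimensional Gaussian measures, and let Φ be the standard normal CDF with inverse Φ⁻¹. Then every measurable function h : ℝ → [0,1] with ∫ h dμ = p_A satisfies ∫ h dν ≥ Φ(Φ⁻¹(p_A) − δ/σ), and equality is attained by the half-line indicator h*(x) = 1{x ≤ σ·Φ⁻¹(p_A)}. -/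
open MeasureTheory ProbabilityTheory Real Filter
open scoped NNReal ENNReal

/-- The inverse of the standard normal CDF (as a generalized inverse). -/
noncomputable def stdNormalCDFInv (p : ℝ) : ℝ :=
  sInf {x : ℝ | p ≤ stdNormalCDF x}

lemma integral_gaussianReal_eq (m : ℝ) {v : ℝ≥0} (hv : v ≠ 0) (h : ℝ → ℝ) :
    ∫ x, h x ∂(gaussianReal m v) = ∫ x, gaussianPDFReal m v x * h x := by
  rw [gaussianReal_of_var_ne_zero m hv]
  have heq : gaussianPDF m v = fun x => ((gaussianPDFReal m v x).toNNReal : ℝ≥0∞) := rfl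
  rw [heq, integral_withDensity_eq_integral_smul (measurable_gaussianPDFReal m v).real_toNNReal]
  congr 1; ext x
  rw [NNReal.smul_def, smul_eq_mul, Real.coe_toNNReal _ (gaussianPDFReal_nonneg m v x)]

lemma gaussianReal_Iic_toReal (m : ℝ) {σ : ℝ} (hσ : 0 < σ) (t : ℝ) :
    ((gaussianReal m ⟨σ^2, sq_nonneg σ⟩) (Set.Iic t)).toReal = stdNormalCDF ((t - m) / σ) := by
  have hmap1 : (gaussianReal 0 1).map (σ * ·) = gaussianReal 0 ⟨σ^2, sq_nonneg σ⟩ := by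
    rw [gaussianReal_map_const_mul]
    norm_num; rfl
  have hmap2 : (gaussianReal 0 ⟨σ^2, sq_nonneg σ⟩).map (· + m)
      = gaussianReal m ⟨σ^2, sq_nonneg σ⟩ := by
    exact (gaussianReal_map_add_const m).trans (by rw [zero_add])
  rw [← hmap2, Measure.map_apply (measurable_add_const m) measurableSet_Iic]
  have h1 : (· + m) ⁻¹' (Set.Iic t) = Set.Iic (t - m) := by
    ext x; simp [le_sub_iff_add_le]
  rw [h1, ← hmap1, Measure.map_apply (measurable_const_mul σ) measurableSet_Iic]
  have h2 : (σ * ·) ⁻¹' (Set.Iic (t - m)) = Set.Iic ((t - m) / σ) := by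
    ext x; simp [le_div_iff₀ hσ, mul_comm]
  rw [h2]; rfl

lemma gaussian_ratio_mono {σ δ : ℝ} (hσ : 0 < σ) (hδ : 0 ≤ δ) {x y : ℝ} (hxy : x ≤ y) :
    gaussianPDFReal δ ⟨σ^2, sq_nonneg σ⟩ x * gaussianPDFReal 0 ⟨σ^2, sq_nonneg σ⟩ y ≤
    gaussianPDFReal δ ⟨σ^2, sq_nonneg σ⟩ y * gaussianPDFReal 0 ⟨σ^2, sq_nonneg σ⟩ x := by
  have hcoe : ((⟨σ^2, sq_nonneg σ⟩ : ℝ≥0) : ℝ) = σ^2 := rfl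
  simp only [gaussianPDFReal, sub_zero]
  have hring : ∀ a b c : ℝ, a * b * (a * c) = a * a * (b * c) := fun a b c => by ring
  rw [hring, hring, ← Real.exp_add, ← Real.exp_add]
  have h2v : (0:ℝ) < 2 * ((⟨σ^2, sq_nonneg σ⟩ : ℝ≥0) : ℝ) := by rw [hcoe]; positivity
  refine mul_le_mul_of_nonneg_left ?_ (by positivity)
  rw [Real.exp_le_exp, ← add_div, ← add_div]
  gcongr ?_ / _
  nlinarith [mul_nonneg hδ (sub_nonneg.2 hxy)]

lemma stdNormalCDF_mono : Monotone stdNormalCDF := by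
  intro x y hxy
  exact ENNReal.toReal_mono (measure_ne_top _ _)
    (measure_mono (Set.Iic_subset_Iic.2 hxy))

lemma stdNormalCDF_repr' (s : ℝ) :
    stdNormalCDF s = ∫ x, (Set.Iic s).indicator (gaussianPDFReal 0 1) x := by
  unfold stdNormalCDF
  rw [gaussianReal_apply_eq_integral 0 one_ne_zero, ENNReal.toReal_ofReal,
    ← integral_indicator measurableSet_Iic]
  exact setIntegral_nonneg measurableSet_Iic fun x _ => gaussianPDFReal_nonneg _ _ _

lemma continuous_stdNormalCDF : Continuous stdNormalCDF := by
  rw [continuous_iff_continuousAt]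
  intro t
  unfold ContinuousAt
  have key : Tendsto (fun s => ∫ x, (Set.Iic s).indicator (gaussianPDFReal 0 1) x) (nhds t)
      (nhds (∫ x, (Set.Iic t).indicator (gaussianPDFReal 0 1) x)) := by
    apply tendsto_integral_filter_of_dominated_convergence (gaussianPDFReal 0 1)
    · exact Eventually.of_forall fun s =>
        ((stronglyMeasurable_gaussianPDFReal 0 1).indicator measurableSet_Iic).aestronglyMeasurable
    · refine Eventually.of_forall fun s => ae_of_all _ fun x => ?_
      rw [Real.norm_eq_abs,
        abs_of_nonneg (Set.indicator_nonneg (fun y _ => gaussianPDFReal_nonneg 0 1 y) x)]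
      exact Set.indicator_le_self' (fun y _ => gaussianPDFReal_nonneg 0 1 y) x
    · exact integrable_gaussianPDFReal 0 1
    · have hae : ∀ᵐ x : ℝ, x ≠ t := by
        rw [ae_iff]
        have : {x : ℝ | ¬ x ≠ t} = {t} := by ext x; simp
        rw [this]
        exact volume_singleton
      filter_upwards [hae] with x hx
      rcases hx.lt_or_gt with hlt | hlt
      · have hev : (fun s : ℝ => (Set.Iic s).indicator (gaussianPDFReal 0 1) x)
            =ᶠ[nhds t] fun _ => gaussianPDFReal 0 1 x := by
          filter_upwards [eventually_gt_nhds hlt] with s hs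
          exact Set.indicator_of_mem (Set.mem_Iic.mpr hs.le) _
        rw [Set.indicator_of_mem (Set.mem_Iic.mpr hlt.le) (gaussianPDFReal 0 1)]
        exact tendsto_const_nhds.congr' (Filter.EventuallyEq.symm hev)
      · have hev : (fun s : ℝ => (Set.Iic s).indicator (gaussianPDFReal 0 1) x)
            =ᶠ[nhds t] fun _ => (0:ℝ) := by
          filter_upwards [eventually_lt_nhds hlt] with s hs
          exact Set.indicator_of_notMem (Set.notMem_Iic.mpr hs) _
        rw [Set.indicator_of_notMem (Set.notMem_Iic.mpr hlt) (gaussianPDFReal 0 1)]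
        exact tendsto_const_nhds.congr' (Filter.EventuallyEq.symm hev)
  rw [stdNormalCDF_repr' t]
  exact key.congr fun s => (stdNormalCDF_repr' s).symm

lemma stdNormalCDF_inv_self {p : ℝ} (hp0 : 0 < p) (hp1 : p < 1) :
    stdNormalCDF (stdNormalCDFInv p) = p := by
  set S := {x : ℝ | p ≤ stdNormalCDF x} with hS
  have hInv : stdNormalCDFInv p = sInf S := rfl
  have hclosed : IsClosed S := isClosed_le continuous_const continuous_stdNormalCDF
  have hne : S.Nonempty := by
    have h1 : Tendsto (fun x : ℝ => (gaussianReal 0 1) (Set.Iic x)) atTop (nhds 1) := by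
      have := tendsto_measure_Iic_atTop (gaussianReal 0 1)
      simpa using this
    have h2 : Tendsto stdNormalCDF atTop (nhds 1) := by
      have := (ENNReal.tendsto_toReal (by norm_num : (1:ℝ≥0∞) ≠ ⊤)).comp h1
      exact this
    obtain ⟨x, hx⟩ := (h2.eventually (eventually_ge_nhds hp1)).exists
    exact ⟨x, hx⟩
  have hbdd : BddBelow S := by
    have h1 : Tendsto (fun n : ℕ => (gaussianReal 0 1) (Set.Iic (-(n:ℝ)))) atTop
        (nhds ((gaussianReal 0 1) (⋂ n : ℕ, Set.Iic (-(n:ℝ))))) := by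
      apply tendsto_measure_iInter_atTop (fun n => measurableSet_Iic.nullMeasurableSet)
      · intro m n hmn
        exact Set.Iic_subset_Iic.2 (neg_le_neg (by exact_mod_cast hmn))
      · exact ⟨0, measure_ne_top _ _⟩
    have hempty : (⋂ n : ℕ, Set.Iic (-(n:ℝ))) = ∅ := by
      ext x
      simp only [Set.mem_iInter, Set.mem_Iic, Set.mem_empty_iff_false, iff_false, not_forall]
      obtain ⟨n, hn⟩ := exists_nat_gt (-x)
      exact ⟨n, by push_neg; linarith⟩
    rw [hempty, measure_empty] at h1
    have h2 : Tendsto (fun n : ℕ => stdNormalCDF (-(n:ℝ))) atTop (nhds 0) := by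
      have := (ENNReal.tendsto_toReal (by norm_num : (0:ℝ≥0∞) ≠ ⊤)).comp h1
      simpa [stdNormalCDF, Function.comp_def] using this
    obtain ⟨n, hn⟩ := (h2.eventually (eventually_lt_nhds hp0)).exists
    refine ⟨-(n:ℝ), fun y hy => ?_⟩
    by_contra hcon
    push_neg at hcon
    exact absurd (le_trans hy (stdNormalCDF_mono hcon.le)) (not_le.2 hn)
  have hmem : stdNormalCDFInv p ∈ S := by rw [hInv]; exact hclosed.csInf_mem hne hbdd
  have hle : stdNormalCDF (stdNormalCDFInv p) ≤ p := by
    have hev : ∀ x < stdNormalCDFInv p, stdNormalCDF x ≤ p := by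
      intro x hx
      by_contra hcon
      push_neg at hcon
      have : x ∈ S := le_of_lt hcon
      exact absurd (csInf_le hbdd this) (not_le.2 (hInv ▸ hx))
    have htend : Tendsto stdNormalCDF
        (nhdsWithin (stdNormalCDFInv p) (Set.Iio (stdNormalCDFInv p)))
        (nhds (stdNormalCDF (stdNormalCDFInv p))) :=
      (continuous_stdNormalCDF.tendsto _).mono_left nhdsWithin_le_nhds
    refine le_of_tendsto htend ?_
    filter_upwards [self_mem_nhdsWithin] with x hx
    exact hev x hx
  exact le_antisymm hle hmem

/-- **Classical Gaussian randomized smoothing certificate** (Cohen et al.).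
For `μ = N(0,σ²)` and `ν = N(δ,σ²)`, every measurable `h : ℝ → [0,1]` with
`∫ h dμ = p_A` satisfies `∫ h dν ≥ Φ(Φ⁻¹(p_A) − δ/σ)`, with equality attained by the
half-line indicator `h* = 1{x ≤ σ·Φ⁻¹(p_A)}`. -/
theorem gaussian_randomized_smoothing_certificate
    (σ δ pA : ℝ) (hσ : 0 < σ) (hδ : 0 ≤ δ) (hpA : pA ∈ Set.Ioo (0 : ℝ) 1)
    (μ ν : Measure ℝ)
    (hμ : μ = gaussianReal 0 ⟨σ ^ 2, sq_nonneg σ⟩)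
    (hν : ν = gaussianReal δ ⟨σ ^ 2, sq_nonneg σ⟩) :
    (∀ h : ℝ → ℝ, Measurable h → (∀ x, h x ∈ Set.Icc (0 : ℝ) 1) →
      (∫ x, h x ∂μ = pA) →
      stdNormalCDF (stdNormalCDFInv pA - δ / σ) ≤ ∫ x, h x ∂ν) ∧
      ∫ x, Set.indicator (Set.Iic (σ * stdNormalCDFInv pA)) (fun _ => (1 : ℝ)) x ∂ν
        = stdNormalCDF (stdNormalCDFInv pA - δ / σ) := by
  subst hμ hν
  obtain ⟨hp0, hp1⟩ := hpA
  have hV : (⟨σ ^ 2, sq_nonneg σ⟩ : ℝ≥0) ≠ 0 := by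
    intro hc
    have : σ ^ 2 = 0 := congrArg NNReal.toReal hc
    nlinarith
  set a := stdNormalCDFInv pA with ha
  set t := σ * a with ht
  set f := gaussianPDFReal 0 ⟨σ ^ 2, sq_nonneg σ⟩ with hf
  set g := gaussianPDFReal δ ⟨σ ^ 2, sq_nonneg σ⟩ with hg
  set ind := (Set.Iic t).indicator (fun _ : ℝ => (1:ℝ)) with hind
  have hind_meas : Measurable ind := measurable_const.indicator measurableSet_Iic
  have hind01 : ∀ x, ind x ∈ Set.Icc (0:ℝ) 1 := by
    intro x
    rw [hind]
    by_cases hx : x ∈ Set.Iic t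
    · rw [Set.indicator_of_mem hx]; exact ⟨zero_le_one, le_refl 1⟩
    · rw [Set.indicator_of_notMem hx]; exact ⟨le_refl 0, zero_le_one⟩
  -- the ν-mass of the half line
  have hνIic : ((gaussianReal δ ⟨σ ^ 2, sq_nonneg σ⟩) (Set.Iic t)).toReal
      = stdNormalCDF (a - δ / σ) := by
    rw [gaussianReal_Iic_toReal δ hσ t, ht, sub_div, mul_div_cancel_left₀ a hσ.ne']
  have hμIic : ((gaussianReal 0 ⟨σ ^ 2, sq_nonneg σ⟩) (Set.Iic t)).toReal = pA := by
    rw [gaussianReal_Iic_toReal 0 hσ t, sub_zero, ht, mul_div_cancel_left₀ a hσ.ne']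
    exact stdNormalCDF_inv_self hp0 hp1
  have hind_eq : ∀ (m : ℝ), ∫ x, ind x ∂(gaussianReal m ⟨σ ^ 2, sq_nonneg σ⟩)
      = ((gaussianReal m ⟨σ ^ 2, sq_nonneg σ⟩) (Set.Iic t)).toReal := by
    intro m
    rw [hind]
    exact integral_indicator_one measurableSet_Iic
  constructor
  · -- the inequality
    intro h hmeas h01 hint
    -- convert everything to Lebesgue integrals
    have hf_pos : 0 < f t := gaussianPDFReal_pos 0 _ t hV
    have hf_nonneg : ∀ x, 0 ≤ f x := fun x => gaussianPDFReal_nonneg _ _ x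
    have hg_nonneg : ∀ x, 0 ≤ g x := fun x => gaussianPDFReal_nonneg _ _ x
    set c := g t / f t with hc
    have hc0 : 0 ≤ c := div_nonneg (hg_nonneg t) (hf_nonneg t)
    -- integrability
    have hmul_int : ∀ (p q : ℝ → ℝ), Integrable p → (∀ x, 0 ≤ p x) → Measurable q →
        (∀ x, q x ∈ Set.Icc (0:ℝ) 1) → Integrable (fun x => p x * q x) := by
      intro p q hp hp0 hq hq01
      refine hp.mono' (hp.aestronglyMeasurable.mul hq.aestronglyMeasurable) (ae_of_all _ ?_)
      intro x
      rw [Real.norm_eq_abs, abs_mul, abs_of_nonneg (hp0 x), abs_of_nonneg (hq01 x).1]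
      exact mul_le_of_le_one_right (hp0 x) (hq01 x).2
    have If : Integrable f := integrable_gaussianPDFReal 0 _
    have Ig : Integrable g := integrable_gaussianPDFReal δ _
    have Ifh : Integrable (fun x => f x * h x) := hmul_int f h If hf_nonneg hmeas h01
    have Igh : Integrable (fun x => g x * h x) := hmul_int g h Ig hg_nonneg hmeas h01
    have Ifind : Integrable (fun x => f x * ind x) := hmul_int f ind If hf_nonneg hind_meas hind01
    have Igind : Integrable (fun x => g x * ind x) := hmul_int g ind Ig hg_nonneg hind_meas hind01
    -- pointwise Neyman–Pearson inequality
    have ptwise : ∀ x, c * (f x * h x) + g x * ind x ≤ g x * h x + c * (f x * ind x) := by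
      intro x
      by_cases hx : x ≤ t
      · have hkey := gaussian_ratio_mono hσ hδ hx
        have h1 : g x ≤ c * f x := by
          rw [hc, div_mul_eq_mul_div, le_div_iff₀ hf_pos]
          exact hkey
        have hindx : ind x = 1 := Set.indicator_of_mem (Set.mem_Iic.mpr hx) _
        rw [hindx]
        nlinarith [mul_nonneg (sub_nonneg.2 (h01 x).2) (sub_nonneg.2 h1)]
      · push_neg at hx
        have hkey := gaussian_ratio_mono hσ hδ hx.le
        have h1 : c * f x ≤ g x := by
          rw [hc, div_mul_eq_mul_div, div_le_iff₀ hf_pos]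
          exact hkey
        have hindx : ind x = 0 := Set.indicator_of_notMem (Set.notMem_Iic.mpr hx) _
        rw [hindx]
        nlinarith [mul_nonneg (h01 x).1 (sub_nonneg.2 h1)]
    have hineq : ∫ x, (c * (f x * h x) + g x * ind x)
        ≤ ∫ x, (g x * h x + c * (f x * ind x)) :=
      integral_mono ((Ifh.const_mul c).add Igind) (Igh.add (Ifind.const_mul c)) ptwise
    rw [integral_add (Ifh.const_mul c) Igind, integral_add Igh (Ifind.const_mul c),
      integral_const_mul, integral_const_mul] at hineq
    -- identify the integrals
    have e1 : ∫ x, f x * h x = pA := by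
      rw [← integral_gaussianReal_eq 0 hV h]
      exact hint
    have e2 : ∫ x, f x * ind x = pA := by
      rw [← integral_gaussianReal_eq 0 hV ind, hind_eq 0, hμIic]
    have e3 : ∫ x, g x * ind x = stdNormalCDF (a - δ / σ) := by
      rw [← integral_gaussianReal_eq δ hV ind, hind_eq δ, hνIic]
    have e4 : ∫ x, g x * h x = ∫ x, h x ∂(gaussianReal δ ⟨σ ^ 2, sq_nonneg σ⟩) :=
      (integral_gaussianReal_eq δ hV h).symm
    rw [e1, e2, e3, e4] at hineq
    linarith
  · -- the equality
    rw [hind_eq δ, hνIic]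
end

section
/- Let S be a countable set, p₁ a probability mass function on S, and γ₁ : S → (0,∞). Fix r > 0 and t > 0 such that γ₁(z₁) ≠ t for every z₁ ∈ S. For σ > 0 define F_σ(t) = Σ_{z₁∈S} p₁(z₁)·Φ((r²/2 + σ²(log t − log γ₁(z₁)))/(σr)), where Φ is the standard normal CDF. Then lim_{σ→∞} F_σ(t) = Σ_{z₁∈S} p₁(z₁)·1{γ₁(z₁) ≤ t}; that is, as σ → ∞ the hybrid likelihood-ratio CDF converges pointwise (at non-atom points) to the discrete staircase CDF of the purely discrete Neyman–Pearson problem. -/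
open MeasureTheory ProbabilityTheory

lemma stdNormalCDF_nonneg (t : ℝ) : 0 ≤ stdNormalCDF t := ENNReal.toReal_nonneg

lemma stdNormalCDF_le_one (t : ℝ) : stdNormalCDF t ≤ 1 := by
  have h := prob_le_one (μ := gaussianReal 0 1) (s := Set.Iic t)
  have := ENNReal.toReal_mono (by simp) h
  simpa [stdNormalCDF] using this

lemma stdNormalCDF_tendsto_atTop :
    Filter.Tendsto stdNormalCDF Filter.atTop (nhds 1) := by
  have h := tendsto_measure_Iic_atTop (gaussianReal 0 1)
  have h1 : (gaussianReal 0 1) Set.univ = 1 := measure_univ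
  rw [h1] at h
  have := (ENNReal.tendsto_toReal (by simp)).comp h
  simp only [ENNReal.toReal_one] at this
  exact this

lemma stdNormalCDF_tendsto_atBot :
    Filter.Tendsto stdNormalCDF Filter.atBot (nhds 0) := by
  have h := tendsto_measure_iInter_atBot (μ := gaussianReal 0 1)
      (s := fun x : ℝ => Set.Iic x)
      (fun i => measurableSet_Iic.nullMeasurableSet) monotone_Iic
      ⟨0, measure_ne_top _ _⟩
  have hempty : (⋂ n : ℝ, Set.Iic n) = (∅ : Set ℝ) := by
    ext x
    simp only [Set.mem_iInter, Set.mem_Iic, Set.mem_empty_iff_false, iff_false, not_forall]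
    exact ⟨x - 1, by push_neg; linarith⟩
  rw [hempty] at h
  simp only [measure_empty] at h
  have := (ENNReal.tendsto_toReal (by simp)).comp h
  simp only [ENNReal.toReal_zero] at this
  exact this

/-- **Recovery of the discrete certificate as `σ → ∞`.**
At any `t > 0` that is not an atom of the discrete likelihood ratio `γ₁`, the hybrid
likelihood-ratio CDF `F_σ(t) = Σ_{z₁} p₁(z₁)·Φ((r²/2 + σ²(log t − log γ₁(z₁)))/(σr))`
converges, as `σ → ∞`, to the discrete staircase `Σ_{z₁} p₁(z₁)·1{γ₁(z₁) ≤ t}`. -/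
theorem hybrid_cdf_tendsto_discrete_staircase
    {S : Type*} [Countable S]
    (p₁ : S → ℝ) (hp₁nn : ∀ z, 0 ≤ p₁ z) (hp₁sum : ∑' z, p₁ z = 1)
    (γ₁ : S → ℝ) (hγ₁ : ∀ z, 0 < γ₁ z)
    (r t : ℝ) (hr : 0 < r) (ht : 0 < t)
    (hne : ∀ z, γ₁ z ≠ t) :
    Filter.Tendsto
      (fun σ : ℝ => ∑' z₁, p₁ z₁ *
        stdNormalCDF ((r ^ 2 / 2 + σ ^ 2 * (Real.log t - Real.log (γ₁ z₁))) / (σ * r)))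
      Filter.atTop
      (nhds (∑' z₁, p₁ z₁ * (if γ₁ z₁ ≤ t then (1 : ℝ) else 0))) := by
  have hsum : Summable p₁ := by
    by_contra h
    rw [tsum_eq_zero_of_not_summable h] at hp₁sum
    norm_num at hp₁sum
  refine tendsto_tsum_of_dominated_convergence hsum ?_ ?_
  · intro z
    set c := Real.log t - Real.log (γ₁ z) with hc
    have harg : ∀ᶠ σ : ℝ in Filter.atTop,
        (r ^ 2 / 2 + σ ^ 2 * c) / (σ * r) = (r ^ 2 / 2) / (σ * r) + σ * (c / r) := by
      filter_upwards [Filter.eventually_gt_atTop 0] with σ hσ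
      field_simp
    have h0 : Filter.Tendsto (fun σ : ℝ => (r ^ 2 / 2) / (σ * r)) Filter.atTop (nhds 0) := by
      apply Filter.Tendsto.div_atTop tendsto_const_nhds
      exact Filter.Tendsto.atTop_mul_const hr Filter.tendsto_id
    rcases lt_or_gt_of_ne (hne z) with hlt | hgt
    · -- γ₁ z < t : c > 0, argument → +∞, Φ → 1
      have hcpos : 0 < c := sub_pos.mpr (Real.log_lt_log (hγ₁ z) hlt)
      have h2 : Filter.Tendsto (fun σ : ℝ => σ * (c / r)) Filter.atTop Filter.atTop :=
        Filter.Tendsto.atTop_mul_const (div_pos hcpos hr) Filter.tendsto_id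
      have hA : Filter.Tendsto
          (fun σ : ℝ => (r ^ 2 / 2 + σ ^ 2 * c) / (σ * r)) Filter.atTop Filter.atTop := by
        refine Filter.Tendsto.congr' (Filter.EventuallyEq.symm harg) ?_
        exact Filter.Tendsto.add_atTop h0 h2
      have := (stdNormalCDF_tendsto_atTop.comp hA).const_mul (p₁ z)
      simpa [hlt.le] using this
    · -- γ₁ z > t : c < 0, argument → -∞, Φ → 0
      have hcneg : c < 0 := sub_neg.mpr (Real.log_lt_log ht hgt)
      have h2 : Filter.Tendsto (fun σ : ℝ => σ * (c / r)) Filter.atTop Filter.atBot :=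
        Filter.Tendsto.atTop_mul_const_of_neg (div_neg_of_neg_of_pos hcneg hr) Filter.tendsto_id
      have hA : Filter.Tendsto
          (fun σ : ℝ => (r ^ 2 / 2 + σ ^ 2 * c) / (σ * r)) Filter.atTop Filter.atBot := by
        refine Filter.Tendsto.congr' (Filter.EventuallyEq.symm harg) ?_
        exact Filter.Tendsto.add_atBot h0 h2
      have := (stdNormalCDF_tendsto_atBot.comp hA).const_mul (p₁ z)
      simpa [not_le.mpr hgt] using this
  · refine Filter.Eventually.of_forall fun σ z => ?_
    rw [norm_mul, Real.norm_of_nonneg (hp₁nn z)]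
    calc p₁ z * ‖stdNormalCDF _‖ ≤ p₁ z * 1 := by
          apply mul_le_mul_of_nonneg_left _ (hp₁nn z)
          rw [Real.norm_of_nonneg (stdNormalCDF_nonneg _)]
          exact stdNormalCDF_le_one _
      _ = p₁ z := mul_one _
end
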